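/- Let d ≥ 1, let A be a symmetric positive definite d×d real matrix whose eigenvalues lie in [μ, β] with 0 < μ ≤ β, let f(x) = (1/2)⟨x, A x⟩, let α ≥ 2√β, and let X : ℝ → ℝ^d be a twice continuously differentiable solution of Ẍ(t) + αẊ(t) + A X(t) = 0. Then for all 0 ≤ t₁ < t₂ and every continuously differentiable curve Y : [t₁,t₂] → ℝ^d with Y(t₁) = X(t₁) and Y(t₂) = X(t₂), one has J_α[Y] ≥ J_α[X], where J_α[Y] = ∫_{t₁}^{t₂} e^{αt}( (1/2)‖Ẏ(t)‖² − f(Y(t)) ) dt. -/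

import Mathlib

open scoped RealInnerProductSpace
open Set

/-- The action functional with constant damping `α` on `[t₁, t₂]` for the quadratic loss
`f(x) = (1/2)⟨x, A x⟩`, evaluated on a curve `Y` with derivative `Y'`. -/
noncomputable def constDampAction (d : ℕ) (A : Matrix (Fin d) (Fin d) ℝ) (α t₁ t₂ : ℝ)
    (Y Y' : ℝ → EuclideanSpace ℝ (Fin d)) : ℝ :=
  ∫ t in t₁..t₂, Real.exp (α * t) *
    ((1 / 2) * ‖Y' t‖ ^ 2 - (1 / 2) * ⟪Y t, Matrix.toEuclideanLin A (Y t)⟫)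

lemma keyalg {E : Type*} [NormedAddCommGroup E] [InnerProductSpace ℝ E]
    (B : E →ₗ[ℝ] E) (hsym : ∀ x y : E, ⟪x, B y⟫ = ⟪y, B x⟫)
    (α c s : ℝ) (hcs : s * s = c) (p p' q q' : E) :
    c * ((1/2) * ‖q'‖^2 - (1/2) * ⟪q, B q⟫) =
      c * ((1/2) * ‖p'‖^2 - (1/2) * ⟪p, B p⟫)
      + (c * (α * ⟪p', q - p⟫ + ⟪(-(α • p' + B p) : E), q - p⟫ + ⟪p', q' - p'⟫)
          - (α/2) * ⟪s • (q - p), s • ((q' - p') + (α/2) • (q - p))⟫)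
      + ((1/2) * ‖s • ((q' - p') + (α/2) • (q - p))‖^2 + (α^2/8) * ‖s • (q - p)‖^2
          - (1/2) * ⟪s • (q - p), B (s • (q - p))⟫) := by
  obtain rfl : c = s * s := hcs.symm
  simp only [← real_inner_self_eq_norm_sq, inner_sub_left, inner_sub_right, inner_add_left,
    inner_add_right, inner_neg_left, real_inner_smul_left, real_inner_smul_right,
    map_add, map_sub, map_smul, inner_smul_left, inner_smul_right, RCLike.conj_to_real,
    real_inner_comm (B p) q, real_inner_comm (B p) p, hsym q p,
    real_inner_comm q p, real_inner_comm p' p, real_inner_comm p' q,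
    real_inner_comm q' p, real_inner_comm q' q, real_inner_comm q' p']
  have hc : ∀ x y : E, ⟪x, y⟫ = ⟪y, x⟫ := fun x y => real_inner_comm y x
  linear_combination (s*s/2) * (hc (B p) q) + (s*s/2) * (hsym q p)

/-- **Global optimality of overdamped Nesterov.**  Let `A` be a symmetric positive definite
matrix with eigenvalues in `[μ, β]` (i.e. `μ‖x‖² ≤ ⟨x, A x⟩ ≤ β‖x‖²`), `0 < μ ≤ β`, and let
`α ≥ 2√β`.  If `X` is a twice continuously differentiable solution of `Ẍ + αẊ + A X = 0`,
then for all `0 ≤ t₁ < t₂`, `X` minimizes the action `J_α` among all `C¹` curves with the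
same endpoints. -/
theorem overdamped_nesterov_global_minimality
    (d : ℕ) (hd : 1 ≤ d) (A : Matrix (Fin d) (Fin d) ℝ) (hA : A.PosDef)
    (μ β : ℝ) (hμ : 0 < μ) (hμβ : μ ≤ β)
    (hlo : ∀ x : EuclideanSpace ℝ (Fin d), μ * ‖x‖ ^ 2 ≤ ⟪x, Matrix.toEuclideanLin A x⟫)
    (hhi : ∀ x : EuclideanSpace ℝ (Fin d), ⟪x, Matrix.toEuclideanLin A x⟫ ≤ β * ‖x‖ ^ 2)
    (α : ℝ) (hα : 2 * Real.sqrt β ≤ α)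
    (X X' X'' : ℝ → EuclideanSpace ℝ (Fin d))
    (hX : ∀ t : ℝ, HasDerivAt X (X' t) t)
    (hX' : ∀ t : ℝ, HasDerivAt X' (X'' t) t)
    (hX'' : Continuous X'')
    (hODE : ∀ t : ℝ, X'' t + α • X' t + Matrix.toEuclideanLin A (X t) = 0) :
    ∀ t₁ t₂ : ℝ, 0 ≤ t₁ → t₁ < t₂ →
      ∀ Y Y' : ℝ → EuclideanSpace ℝ (Fin d),
        (∀ t ∈ Icc t₁ t₂, HasDerivWithinAt Y (Y' t) (Icc t₁ t₂) t) →
        ContinuousOn Y' (Icc t₁ t₂) →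
        Y t₁ = X t₁ → Y t₂ = X t₂ →
        constDampAction d A α t₁ t₂ Y Y' ≥ constDampAction d A α t₁ t₂ X X' := by
  intro t₁ t₂ ht₁ hlt Y Y' hY hY'c hY1 hY2
  have hle : t₁ ≤ t₂ := hlt.le
  set B : EuclideanSpace ℝ (Fin d) →ₗ[ℝ] EuclideanSpace ℝ (Fin d) :=
    Matrix.toEuclideanLin A with hB
  -- symmetry of B
  have hS := Matrix.isHermitian_iff_isSymmetric.mp hA.isHermitian
  have hsym : ∀ x y : EuclideanSpace ℝ (Fin d), ⟪x, B y⟫ = ⟪y, B x⟫ := by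
    intro x y
    exact (real_inner_comm (B y) x).trans (hS y x)
  -- continuity facts
  have hXc : Continuous X := continuous_iff_continuousAt.mpr fun t => (hX t).continuousAt
  have hX'c : Continuous X' := continuous_iff_continuousAt.mpr fun t => (hX' t).continuousAt
  have hBc : Continuous B := B.continuous_of_finiteDimensional
  have hYc : ContinuousOn Y (Icc t₁ t₂) := fun t ht => (hY t ht).continuousWithinAt
  -- spectral bound α² ≥ 4β
  have hβ : (0:ℝ) ≤ β := (hμ.trans_le hμβ).le
  have hα2 : 4 * β ≤ α ^ 2 := by
    have h1 : Real.sqrt β ^ 2 = β := Real.sq_sqrt hβ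
    nlinarith [Real.sqrt_nonneg β]
  -- auxiliary curves
  set W : ℝ → EuclideanSpace ℝ (Fin d) :=
    fun t => Real.exp (α/2 * t) • (Y t - X t) with hWdef
  set W' : ℝ → EuclideanSpace ℝ (Fin d) :=
    fun t => Real.exp (α/2 * t) • ((Y' t - X' t) + (α/2) • (Y t - X t)) with hW'def
  set φ : ℝ → ℝ := fun t =>
    Real.exp (α * t) * ⟪X' t, Y t - X t⟫ - (α/4) * ⟪W t, W t⟫ with hφdef
  set ψ : ℝ → ℝ := fun t =>
    Real.exp (α * t) * (α * ⟪X' t, Y t - X t⟫ + ⟪X'' t, Y t - X t⟫ + ⟪X' t, Y' t - X' t⟫)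
      - (α/2) * ⟪W t, W' t⟫ with hψdef
  set R : ℝ → ℝ := fun t =>
    (1/2) * ‖W' t‖^2 + (α^2/8) * ‖W t‖^2 - (1/2) * ⟪W t, B (W t)⟫ with hRdef
  -- the pointwise key identity
  have key : ∀ t : ℝ,
      Real.exp (α * t) * ((1/2) * ‖Y' t‖^2 - (1/2) * ⟪Y t, B (Y t)⟫) =
        Real.exp (α * t) * ((1/2) * ‖X' t‖^2 - (1/2) * ⟪X t, B (X t)⟫) + ψ t + R t := by
    intro t
    have hcs : Real.exp (α/2 * t) * Real.exp (α/2 * t) = Real.exp (α * t) := by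
      rw [← Real.exp_add]; congr 1; ring
    have hX''eq : X'' t = -(α • X' t + B (X t)) := by
      rw [eq_neg_iff_add_eq_zero, ← add_assoc]
      exact hODE t
    have h := keyalg B hsym α (Real.exp (α * t)) (Real.exp (α/2 * t)) hcs
      (X t) (X' t) (Y t) (Y' t)
    rw [← hX''eq] at h
    rw [h, hψdef, hRdef, hWdef, hW'def]
  -- derivative of φ at interior points
  have hφderiv : ∀ t ∈ Ioo t₁ t₂, HasDerivAt φ (ψ t) t := by
    intro t ht
    have hYt : HasDerivAt Y (Y' t) t :=
      (hY t (Ioo_subset_Icc_self ht)).hasDerivAt (Icc_mem_nhds ht.1 ht.2)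
    have hZt : HasDerivAt (fun t => Y t - X t) (Y' t - X' t) t := hYt.sub (hX t)
    have hexp : HasDerivAt (fun t => Real.exp (α * t)) (α * Real.exp (α * t)) t := by
      have := HasDerivAt.exp ((hasDerivAt_id t).const_mul α)
      simpa [mul_comm] using this
    have hexp2 : HasDerivAt (fun t => Real.exp (α/2 * t)) ((α/2) * Real.exp (α/2 * t)) t := by
      have := HasDerivAt.exp ((hasDerivAt_id t).const_mul (α/2))
      simpa [mul_comm] using this
    have hWt : HasDerivAt W (W' t) t := by
      have h := hexp2.smul hZt
      have heq : Real.exp (α/2 * t) • (Y' t - X' t) + ((α/2) * Real.exp (α/2 * t)) • (Y t - X t)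
          = W' t := by rw [hW'def]; module
      rw [heq] at h
      exact h
    have hinner1 : HasDerivAt (fun t => ⟪X' t, Y t - X t⟫)
        (⟪X' t, Y' t - X' t⟫ + ⟪X'' t, Y t - X t⟫) t := (hX' t).inner ℝ hZt
    have hinner2 : HasDerivAt (fun t => ⟪W t, W t⟫) (⟪W t, W' t⟫ + ⟪W' t, W t⟫) t :=
      hWt.inner ℝ hWt
    have h := (hexp.mul hinner1).sub (hinner2.const_mul (α/4))
    have heq : α * Real.exp (α * t) * ⟪X' t, Y t - X t⟫
          + Real.exp (α * t) * (⟪X' t, Y' t - X' t⟫ + ⟪X'' t, Y t - X t⟫)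
          - (α/4) * (⟪W t, W' t⟫ + ⟪W' t, W t⟫) = ψ t := by
      rw [hψdef]
      linear_combination (α/4) * (real_inner_comm (W' t) (W t))
    rw [heq] at h
    exact h
  -- continuity of the pieces on the interval
  have hZc : ContinuousOn (fun t => Y t - X t) (Icc t₁ t₂) := hYc.sub hXc.continuousOn
  have hZ'c : ContinuousOn (fun t => Y' t - X' t) (Icc t₁ t₂) := hY'c.sub hX'c.continuousOn
  have hec : Continuous fun t : ℝ => Real.exp (α * t) := by fun_prop
  have hec2 : Continuous fun t : ℝ => Real.exp (α/2 * t) := by fun_prop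
  have hWc : ContinuousOn W (Icc t₁ t₂) := hec2.continuousOn.smul hZc
  have hW'c : ContinuousOn W' (Icc t₁ t₂) :=
    hec2.continuousOn.smul (hZ'c.add (hZc.const_smul (α/2)))
  have hφc : ContinuousOn φ (Icc t₁ t₂) :=
    (hec.continuousOn.mul (hX'c.continuousOn.inner hZc)).sub
      (continuousOn_const.mul (hWc.inner hWc))
  have hψc : ContinuousOn ψ (Icc t₁ t₂) := by
    apply ContinuousOn.sub
    · exact hec.continuousOn.mul (((continuousOn_const.mul
        (hX'c.continuousOn.inner hZc)).add (hX''.continuousOn.inner hZc)).add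
        (hX'c.continuousOn.inner hZ'c))
    · exact continuousOn_const.mul (hWc.inner hW'c)
  have hRc : ContinuousOn R (Icc t₁ t₂) := by
    apply ContinuousOn.sub
    · exact (continuousOn_const.mul ((hW'c.norm).pow 2)).add
        (continuousOn_const.mul ((hWc.norm).pow 2))
    · exact continuousOn_const.mul (hWc.inner ((hBc.continuousOn).comp hWc (mapsTo_univ _ _)))
  -- integrabilities
  have huIcc : uIcc t₁ t₂ = Icc t₁ t₂ := uIcc_of_le hle
  have hIψ : IntervalIntegrable ψ MeasureTheory.volume t₁ t₂ :=
    (huIcc ▸ hψc).intervalIntegrable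
  have hIR : IntervalIntegrable R MeasureTheory.volume t₁ t₂ :=
    (huIcc ▸ hRc).intervalIntegrable
  have hIX : IntervalIntegrable
      (fun t => Real.exp (α * t) * ((1/2) * ‖X' t‖^2 - (1/2) * ⟪X t, B (X t)⟫))
      MeasureTheory.volume t₁ t₂ := by
    apply Continuous.intervalIntegrable
    exact hec.mul ((continuous_const.mul ((hX'c.norm).pow 2)).sub
      (continuous_const.mul (hXc.inner (hBc.comp hXc))))
  -- FTC: the ψ integral vanishes
  have hφ1 : φ t₁ = 0 := by simp [hφdef, hWdef, hY1]
  have hφ2 : φ t₂ = 0 := by simp [hφdef, hWdef, hY2]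
  have hFTC : ∫ t in t₁..t₂, ψ t = 0 := by
    rw [intervalIntegral.integral_eq_sub_of_hasDeriv_right_of_le hle hφc
      (fun t ht => (hφderiv t ht).hasDerivWithinAt) hIψ, hφ1, hφ2, sub_zero]
  -- the R integral is nonnegative
  have hIRnn : 0 ≤ ∫ t in t₁..t₂, R t := by
    apply intervalIntegral.integral_nonneg hle
    intro u _
    have h1 := hhi (W u)
    rw [hRdef]
    nlinarith [sq_nonneg ‖W' u‖, sq_nonneg ‖W u‖]
  -- assemble
  have hfun : (fun t => Real.exp (α * t) * ((1/2) * ‖Y' t‖^2 - (1/2) * ⟪Y t, B (Y t)⟫))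
      = fun t => Real.exp (α * t) * ((1/2) * ‖X' t‖^2 - (1/2) * ⟪X t, B (X t)⟫) + ψ t + R t :=
    funext key
  show constDampAction d A α t₁ t₂ X X' ≤ constDampAction d A α t₁ t₂ Y Y'
  unfold constDampAction
  rw [show (fun t => Real.exp (α * t) * ((1 / 2) * ‖Y' t‖ ^ 2
      - (1 / 2) * ⟪Y t, Matrix.toEuclideanLin A (Y t)⟫))
      = fun t => Real.exp (α * t) * ((1/2) * ‖X' t‖^2 - (1/2) * ⟪X t, B (X t)⟫) + ψ t + R t
    from hfun]
  rw [intervalIntegral.integral_add (hIX.add hIψ) hIR, intervalIntegral.integral_add hIX hIψ,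
    hFTC, add_zero]
  rw [hB]
  linarith
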